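/- arXiv:cs/0507048 — 2 statements merged into one kernel-verified Lean document; each statement's English description precedes it below -/
import Mathlib

section
/- A clause γ ∈ Π is CIRC-redundant in Π if and only if for every model M of (Π \ {γ}) ∪ ¬γ there exists a model M' of Π \ {γ} with M' ⊊ M. -/
/-- A propositional clause: sets of positively and negatively occurring variables. -/
structure Clause (V : Type) where
  pos : Set V
  neg : Set V

/-- A model (set of variables assigned true) satisfies a clause. -/
def Clause.sat {V : Type} (M : Set V) (c : Clause V) : Prop :=
  (∃ x ∈ c.pos, x ∈ M) ∨ (∃ x ∈ c.neg, x ∉ M)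

/-- Models of a CNF formula (set of clauses). -/
def ModOf {V : Type} (F : Set (Clause V)) : Set (Set V) :=
  {M | ∀ c ∈ F, c.sat M}

/-- Minimal models of a formula, w.r.t. set inclusion. -/
def CIRC {V : Type} (F : Set (Clause V)) : Set (Set V) :=
  {M | M ∈ ModOf F ∧ ¬ ∃ M' ∈ ModOf F, M' ⊂ M}

/-- The formula ¬γ: the set of unit clauses negating each literal of γ. -/
def negOf {V : Type} (γ : Clause V) : Set (Clause V) :=
  (fun x => (⟨∅, {x}⟩ : Clause V)) '' γ.pos ∪ (fun x => (⟨{x}, ∅⟩ : Clause V)) '' γ.neg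

lemma mod_union {V : Type} (A B : Set (Clause V)) (M : Set V) :
    M ∈ ModOf (A ∪ B) ↔ M ∈ ModOf A ∧ M ∈ ModOf B := by
  simp [ModOf, or_imp, forall_and]

lemma mod_negOf {V : Type} (γ : Clause V) (M : Set V) :
    M ∈ ModOf (negOf γ) ↔ ¬ γ.sat M := by
  constructor
  · intro h hs
    rcases hs with ⟨x, hx, hxM⟩ | ⟨x, hx, hxM⟩
    · have := h ⟨∅, {x}⟩ (Or.inl ⟨x, hx, rfl⟩)
      rcases this with ⟨y, hy, _⟩ | ⟨y, hy, hyM⟩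
      · exact hy
      · exact hyM (by rwa [Set.mem_singleton_iff.mp hy])
    · have := h ⟨{x}, ∅⟩ (Or.inr ⟨x, hx, rfl⟩)
      rcases this with ⟨y, hy, hyM⟩ | ⟨y, hy, _⟩
      · exact hxM (by rwa [← Set.mem_singleton_iff.mp hy])
      · exact hy
  · intro h c hc
    rcases hc with ⟨x, hx, rfl⟩ | ⟨x, hx, rfl⟩
    · refine Or.inr ⟨x, rfl, fun hxM => h (Or.inl ⟨x, hx, hxM⟩)⟩
    · refine Or.inl ⟨x, rfl, by_contra fun hxM => h (Or.inr ⟨x, hx, hxM⟩)⟩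

lemma mod_subset {V : Type} {A B : Set (Clause V)} (h : A ⊆ B) :
    ModOf B ⊆ ModOf A := fun M hM c hc => hM c (h hc)

theorem circ_redundant_iff_contains_model' {V : Type} [Fintype V]
    (F : Set (Clause V)) (hfin : F.Finite) (γ : Clause V) (hγ : γ ∈ F) :
    CIRC (F \ {γ}) = CIRC F ↔
      ∀ M ∈ ModOf ((F \ {γ}) ∪ negOf γ), ∃ M' ∈ ModOf (F \ {γ}), M' ⊂ M := by
  classical
  have hsub : ModOf F ⊆ ModOf (F \ {γ}) := mod_subset Set.diff_subset
  constructor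
  · intro heq M hM
    rw [mod_union, mod_negOf] at hM
    by_contra hno
    push_neg at hno
    have : M ∈ CIRC (F \ {γ}) := ⟨hM.1, fun ⟨M', hM', hss⟩ => hno M' hM' hss⟩
    rw [heq] at this
    exact hM.2 (this.1 γ hγ)
  · intro h
    ext M
    constructor
    · rintro ⟨hM, hmin⟩
      by_cases hγs : γ.sat M
      · refine ⟨fun c hc => ?_, fun ⟨M', hM', hss⟩ => hmin ⟨M', hsub hM', hss⟩⟩
        by_cases hcγ : c = γ
        · exact hcγ ▸ hγs
        · exact hM c ⟨hc, hcγ⟩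
      · exfalso
        exact hmin (h M ((mod_union _ _ _).mpr ⟨hM, (mod_negOf γ M).mpr hγs⟩))
    · rintro ⟨hM, hmin⟩
      refine ⟨hsub hM, fun ⟨M', hM', hss⟩ => ?_⟩
      -- find a minimal model of F \ {γ} below M'
      have hfin2 : Finite (Set V) := inferInstance
      have hwf : IsWellFounded (Set V) (· ⊂ ·) := by
        exact ⟨Finite.wellFounded_of_trans_of_irrefl _⟩
      obtain ⟨N, ⟨hN1, hN2⟩, hNmin⟩ :=
        hwf.wf.has_min {N | N ∈ ModOf (F \ {γ}) ∧ N ⊆ M'} ⟨M', hM', subset_rfl⟩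
      have hNmod : N ∈ ModOf F := by
        by_contra hNF
        have hγN : ¬ γ.sat N := by
          intro hs
          refine hNF fun c hc => ?_
          by_cases hcγ : c = γ
          · exact hcγ ▸ hs
          · exact hN1 c ⟨hc, hcγ⟩
        obtain ⟨N', hN', hss⟩ := h N ((mod_union _ _ _).mpr ⟨hN1, (mod_negOf γ N).mpr hγN⟩)
        exact hNmin N' ⟨hN', hss.subset.trans hN2⟩ hss
      exact hmin ⟨N, hNmod, lt_of_le_of_lt hN2 hss⟩
end

section
/- A positive clause γ (containing only positive literals) is CIRC-redundant in a CNF formula Π if and only if it is classically redundant in Π, i.e., Π \ {γ} ⊨ γ. -/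
/-- Every model of a formula over a finite variable set contains a minimal model. -/
lemma exists_min_below {V : Type} [Fintype V] (G : Set (Clause V)) (M : Set V)
    (hM : M ∈ ModOf G) : ∃ N, N ⊆ M ∧ N ∈ CIRC G := by
  have : Finite (Set V) := inferInstance
  have hwf : WellFounded ((· < ·) : Set V → Set V → Prop) :=
    Finite.to_wellFoundedLT.wf
  obtain ⟨N, ⟨hNG, hNM⟩, hmin⟩ :=
    hwf.has_min {N | N ∈ ModOf G ∧ N ⊆ M} ⟨M, hM, subset_rfl⟩
  refine ⟨N, hNM, hNG, ?_⟩
  rintro ⟨M', hM'G, hlt⟩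
  exact hmin M' ⟨hM'G, hlt.subset.trans hNM⟩ hlt

/-- For a positive clause, CIRC-redundancy coincides with classical redundancy. -/
theorem positive_circ_redundant_iff_redundant {V : Type} [Fintype V]
    (F : Set (Clause V)) (hfin : F.Finite) (γ : Clause V) (hγ : γ ∈ F)
    (hpos : γ.neg = ∅) :
    CIRC (F \ {γ}) = CIRC F ↔ ∀ M ∈ ModOf (F \ {γ}), γ.sat M := by
  constructor
  · intro h M hM
    obtain ⟨N, hNM, hN⟩ := exists_min_below (F \ {γ}) M hM
    rw [h] at hN
    have hsat : γ.sat N := hN.1 γ hγ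
    rcases hsat with ⟨x, hx, hxN⟩ | ⟨x, hx, _⟩
    · exact Or.inl ⟨x, hx, hNM hxN⟩
    · rw [hpos] at hx; exact absurd hx (Set.notMem_empty x)
  · intro h
    have hmod : ModOf (F \ {γ}) = ModOf F := by
      ext M
      constructor
      · intro hM c hc
        by_cases hcγ : c = γ
        · exact hcγ ▸ h M hM
        · exact hM c ⟨hc, hcγ⟩
      · intro hM c hc
        exact hM c hc.1
    unfold CIRC
    rw [hmod]
end
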